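/- The space T₁ of G-invariant sections of O(3,3,3) on ℙ¹×ℙ¹×ℙ¹ for the ℤ/9 action generated by (x,y,z) ↦ (y,z,ωx) (with the linearization induced from the action on H⁰(O(1,1,1)) containing no trivial character) has dimension 8, with basis in affine coordinates: 1; x³+y³+z³; x²y+y²z+ωz²x; x²z+ωy²x+ωz²y; x³y³+y³z³+z³x³; x³y²z+ωy³z²x+z³x²y; x³yz²+ω²y³zx²+z³xy²; x³y³z³. -/

import Mathlib

open MvPolynomial

noncomputable section

/-- The space `H⁰(ℙ¹×ℙ¹×ℙ¹, O(3,3,3))`, realized in affine coordinates as the span of the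
monomials `xᵃyᵇz^c` with `0 ≤ a, b, c ≤ 3` (a 64-dimensional space). -/
def tridegree333 : Submodule ℂ (MvPolynomial (Fin 3) ℂ) :=
  Submodule.span ℂ {p | ∃ m : Fin 3 →₀ ℕ, (∀ i, m i ≤ 3) ∧ p = monomial m 1}

/-- The generator of the `ℤ/9`-action on sections: in affine coordinates `x = X 0`,
`y = X 1`, `z = X 2`, it is the substitution `(x, y, z) ↦ (y, z, ωx)` (this substitution
action is the linearization induced from the action on `H⁰(O(1,1,1))` containing no
trivial character). -/
def genAction (ω : ℂ) : MvPolynomial (Fin 3) ℂ →ₐ[ℂ] MvPolynomial (Fin 3) ℂ :=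
  aeval ![X 1, X 2, C ω * X 0]

/-- The space `T₁` of invariant sections of `O(3,3,3)` under the `ℤ/9`-action. -/
def T1 (ω : ℂ) : Submodule ℂ (MvPolynomial (Fin 3) ℂ) :=
  tridegree333 ⊓ LinearMap.ker ((genAction ω).toLinearMap - LinearMap.id)

/-- The eight invariant sections, in affine coordinates `x = X 0`, `y = X 1`, `z = X 2`:
`1; x³+y³+z³; x²y+y²z+ωz²x; x²z+ωy²x+ωz²y; x³y³+y³z³+z³x³; x³y²z+ωy³z²x+z³x²y;
x³yz²+ω²y³zx²+z³xy²; x³y³z³`. -/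
def basisT1 (ω : ℂ) : Fin 8 → MvPolynomial (Fin 3) ℂ :=
  ![1,
    X 0 ^ 3 + X 1 ^ 3 + X 2 ^ 3,
    X 0 ^ 2 * X 1 + X 1 ^ 2 * X 2 + C ω * (X 2 ^ 2 * X 0),
    X 0 ^ 2 * X 2 + C ω * (X 1 ^ 2 * X 0) + C ω * (X 2 ^ 2 * X 1),
    X 0 ^ 3 * X 1 ^ 3 + X 1 ^ 3 * X 2 ^ 3 + X 2 ^ 3 * X 0 ^ 3,
    X 0 ^ 3 * X 1 ^ 2 * X 2 + C ω * (X 1 ^ 3 * X 2 ^ 2 * X 0) + X 2 ^ 3 * X 0 ^ 2 * X 1,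
    X 0 ^ 3 * X 1 * X 2 ^ 2 + C ω ^ 2 * (X 1 ^ 3 * X 2 * X 0 ^ 2) + X 2 ^ 3 * X 0 * X 1 ^ 2,
    X 0 ^ 3 * X 1 ^ 3 * X 2 ^ 3]

set_option maxHeartbeats 4000000

def m3 (a b c : ℕ) : Fin 3 →₀ ℕ := Finsupp.equivFunOnFinite.symm ![a, b, c]

lemma m3_apply (a b c : ℕ) (i : Fin 3) : m3 a b c i = ![a,b,c] i := rfl

lemma m_eq (m : Fin 3 →₀ ℕ) : m = m3 (m 0) (m 1) (m 2) := by
  ext i; fin_cases i <;> simp [m3_apply]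

lemma m3_inj {a b c a' b' c' : ℕ} : m3 a b c = m3 a' b' c' ↔ a = a' ∧ b = b' ∧ c = c' := by
  constructor
  · intro h
    exact ⟨by simpa [m3_apply] using DFunLike.congr_fun h 0,
           by simpa [m3_apply] using DFunLike.congr_fun h 1,
           by simpa [m3_apply] using DFunLike.congr_fun h 2⟩
  · rintro ⟨rfl, rfl, rfl⟩; rfl

lemma mon (r : ℂ) (a b c : ℕ) :
    (monomial (m3 a b c) r : MvPolynomial (Fin 3) ℂ) = C r * (X 0 ^ a * X 1 ^ b * X 2 ^ c) := by
  rw [monomial_eq]; congr 1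
  rw [Finsupp.prod_fintype _ _ (fun i => pow_zero _), Fin.prod_univ_three]
  simp [m3_apply]

lemma cmon (a b c a' b' c' : ℕ) (r : ℂ) :
    coeff (m3 a b c) (monomial (m3 a' b' c') r : MvPolynomial (Fin 3) ℂ) =
      if a = a' ∧ b = b' ∧ c = c' then r else 0 := by
  rw [coeff_monomial]
  congr 1
  simp [eq_comm, m3_inj]

lemma genAction_monomial (ω : ℂ) (n : Fin 3 →₀ ℕ) (r : ℂ) :
    genAction ω (monomial n r) = monomial (m3 (n 2) (n 0) (n 1)) (ω ^ (n 2) * r) := by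
  rw [genAction, aeval_monomial, Finsupp.prod_fintype _ _ (fun i => pow_zero _),
    Fin.prod_univ_three, mon]
  simp only [Matrix.cons_val_zero, Matrix.cons_val_one, Matrix.head_cons,
    Matrix.cons_val_two, Matrix.tail_cons, algebraMap_eq, map_mul, map_pow, mul_pow]
  ring

lemma coeff_genAction (ω : ℂ) (p : MvPolynomial (Fin 3) ℂ) (a b c : ℕ) :
    coeff (m3 a b c) (genAction ω p) = ω ^ a * coeff (m3 b c a) p := by
  induction p using MvPolynomial.induction_on' with
  | monomial n r =>
    obtain ⟨x, y, z, rfl⟩ : ∃ x y z, n = m3 x y z := ⟨n 0, n 1, n 2, m_eq n⟩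
    rw [genAction_monomial, coeff_monomial, coeff_monomial]
    simp only [m3_apply, Matrix.cons_val_zero, Matrix.cons_val_one, Matrix.head_cons,
      Matrix.cons_val_two, Matrix.tail_cons, m3_inj]
    by_cases h : x = b ∧ y = c ∧ z = a
    · obtain ⟨rfl, rfl, rfl⟩ := h
      simp
    · rw [if_neg, if_neg h, mul_zero]
      tauto
  | add p q hp hq => simp only [map_add, coeff_add, hp, hq]; ring

lemma tridegree_coeff {q : MvPolynomial (Fin 3) ℂ} (hq : q ∈ tridegree333)
    {m : Fin 3 →₀ ℕ} (hm : ¬ ∀ i, m i ≤ 3) : coeff m q = 0 := by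
  induction hq using Submodule.span_induction with
  | mem x hx =>
    obtain ⟨n, hn, rfl⟩ := hx
    rw [coeff_monomial, if_neg]
    rintro rfl
    exact hm hn
  | zero => simp
  | add x y _ _ hx hy => simp [coeff_add, hx, hy]
  | smul r x _ hx => simp [coeff_smul, hx]

lemma mono_mem (a b c : ℕ) (ha : a ≤ 3) (hb : b ≤ 3) (hc : c ≤ 3) (r : ℂ) :
    (monomial (m3 a b c) r : MvPolynomial (Fin 3) ℂ) ∈ tridegree333 := by
  have h1 : (monomial (m3 a b c) r : MvPolynomial (Fin 3) ℂ) = r • monomial (m3 a b c) 1 := by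
    rw [smul_monomial, smul_eq_mul, mul_one]
  rw [h1]
  exact Submodule.smul_mem _ _ (Submodule.subset_span
    ⟨m3 a b c, fun i => by fin_cases i <;> simpa [m3_apply], rfl⟩)

/-- For the `ℤ/9`-action on `ℙ¹×ℙ¹×ℙ¹` generated by `(x,y,z) ↦ (y,z,ωx)` (`ω` a primitive
cube root of unity), the space `T₁` of invariant sections of `O(3,3,3)` has dimension 8,
with the eight listed sections as a basis. -/
theorem T1_dimension_and_basis (ω : ℂ) (hω : IsPrimitiveRoot ω 3) :
    Module.finrank ℂ (T1 ω) = 8 ∧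
    T1 ω = Submodule.span ℂ (Set.range (basisT1 ω)) ∧
    LinearIndependent ℂ (basisT1 ω) := by
  have hω3 : ω ^ 3 = 1 := hω.pow_eq_one
  have hC : (C ω : MvPolynomial (Fin 3) ℂ) ^ 3 = 1 := by rw [← map_pow, hω3, map_one]
  have hb0 : basisT1 ω 0 = monomial (m3 0 0 0) (1:ℂ) := by
    show (1 : MvPolynomial (Fin 3) ℂ) = _
    rw [mon]
    try simp only [map_one, map_pow, one_mul]
    try ring
  have hb1 : basisT1 ω 1 = monomial (m3 3 0 0) (1:ℂ) + monomial (m3 0 3 0) 1 + monomial (m3 0 0 3) 1 := by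
    show X 0 ^ 3 + X 1 ^ 3 + X 2 ^ 3 = _
    rw [mon, mon, mon]
    try simp only [map_one, map_pow, one_mul]
    try ring
  have hb2 : basisT1 ω 2 = monomial (m3 2 1 0) (1:ℂ) + monomial (m3 0 2 1) 1 + monomial (m3 1 0 2) ω := by
    show X 0 ^ 2 * X 1 + X 1 ^ 2 * X 2 + C ω * (X 2 ^ 2 * X 0) = _
    rw [mon, mon, mon]
    try simp only [map_one, map_pow, one_mul]
    try ring
  have hb3 : basisT1 ω 3 = monomial (m3 2 0 1) (1:ℂ) + monomial (m3 1 2 0) ω + monomial (m3 0 1 2) ω := by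
    show X 0 ^ 2 * X 2 + C ω * (X 1 ^ 2 * X 0) + C ω * (X 2 ^ 2 * X 1) = _
    rw [mon, mon, mon]
    try simp only [map_one, map_pow, one_mul]
    try ring
  have hb4 : basisT1 ω 4 = monomial (m3 3 3 0) (1:ℂ) + monomial (m3 0 3 3) 1 + monomial (m3 3 0 3) 1 := by
    show X 0 ^ 3 * X 1 ^ 3 + X 1 ^ 3 * X 2 ^ 3 + X 2 ^ 3 * X 0 ^ 3 = _
    rw [mon, mon, mon]
    try simp only [map_one, map_pow, one_mul]
    try ring
  have hb5 : basisT1 ω 5 = monomial (m3 3 2 1) (1:ℂ) + monomial (m3 1 3 2) ω + monomial (m3 2 1 3) 1 := by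
    show X 0 ^ 3 * X 1 ^ 2 * X 2 + C ω * (X 1 ^ 3 * X 2 ^ 2 * X 0) + X 2 ^ 3 * X 0 ^ 2 * X 1 = _
    rw [mon, mon, mon]
    try simp only [map_one, map_pow, one_mul]
    try ring
  have hb6 : basisT1 ω 6 = monomial (m3 3 1 2) (1:ℂ) + monomial (m3 2 3 1) (ω^2) + monomial (m3 1 2 3) 1 := by
    show X 0 ^ 3 * X 1 * X 2 ^ 2 + C ω ^ 2 * (X 1 ^ 3 * X 2 * X 0 ^ 2) + X 2 ^ 3 * X 0 * X 1 ^ 2 = _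
    rw [mon, mon, mon]
    try simp only [map_one, map_pow, one_mul]
    try ring
  have hb7 : basisT1 ω 7 = monomial (m3 3 3 3) (1:ℂ) := by
    show X 0 ^ 3 * X 1 ^ 3 * X 2 ^ 3 = _
    rw [mon]
    try simp only [map_one, map_pow, one_mul]
    try ring
  have hindep : LinearIndependent ℂ (basisT1 ω) := by
    rw [Fintype.linearIndependent_iff]
    intro g hg i
    have key : ∀ a b c : ℕ, coeff (m3 a b c) (∑ j, g j • basisT1 ω j) = 0 := by
      intro a b c; rw [hg]; simp
    fin_cases i
    · have k := key 0 0 0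
      rw [Fin.sum_univ_eight] at k
      norm_num [m3_inj, hb0, hb1, hb2, hb3, hb4, hb5, hb6, hb7, coeff_add, coeff_smul, cmon, smul_eq_mul, mul_ite, mul_one, mul_zero] at k
      simpa using k
    · have k := key 3 0 0
      rw [Fin.sum_univ_eight] at k
      norm_num [m3_inj, hb0, hb1, hb2, hb3, hb4, hb5, hb6, hb7, coeff_add, coeff_smul, cmon, smul_eq_mul, mul_ite, mul_one, mul_zero] at k
      simpa using k
    · have k := key 2 1 0
      rw [Fin.sum_univ_eight] at k
      norm_num [m3_inj, hb0, hb1, hb2, hb3, hb4, hb5, hb6, hb7, coeff_add, coeff_smul, cmon, smul_eq_mul, mul_ite, mul_one, mul_zero] at k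
      simpa using k
    · have k := key 2 0 1
      rw [Fin.sum_univ_eight] at k
      norm_num [m3_inj, hb0, hb1, hb2, hb3, hb4, hb5, hb6, hb7, coeff_add, coeff_smul, cmon, smul_eq_mul, mul_ite, mul_one, mul_zero] at k
      simpa using k
    · have k := key 3 3 0
      rw [Fin.sum_univ_eight] at k
      norm_num [m3_inj, hb0, hb1, hb2, hb3, hb4, hb5, hb6, hb7, coeff_add, coeff_smul, cmon, smul_eq_mul, mul_ite, mul_one, mul_zero] at k
      simpa using k
    · have k := key 3 2 1
      rw [Fin.sum_univ_eight] at k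
      norm_num [m3_inj, hb0, hb1, hb2, hb3, hb4, hb5, hb6, hb7, coeff_add, coeff_smul, cmon, smul_eq_mul, mul_ite, mul_one, mul_zero] at k
      simpa using k
    · have k := key 3 1 2
      rw [Fin.sum_univ_eight] at k
      norm_num [m3_inj, hb0, hb1, hb2, hb3, hb4, hb5, hb6, hb7, coeff_add, coeff_smul, cmon, smul_eq_mul, mul_ite, mul_one, mul_zero] at k
      simpa using k
    · have k := key 3 3 3
      rw [Fin.sum_univ_eight] at k
      norm_num [m3_inj, hb0, hb1, hb2, hb3, hb4, hb5, hb6, hb7, coeff_add, coeff_smul, cmon, smul_eq_mul, mul_ite, mul_one, mul_zero] at k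
      simpa using k
  have hfix : ∀ i, genAction ω (basisT1 ω i) = basisT1 ω i := by
    intro i
    fin_cases i
    · show genAction ω ((1 : MvPolynomial (Fin 3) ℂ)) = _
      simp only [genAction, map_add, map_mul, map_pow, map_one, aeval_X, aeval_C, algebraMap_eq,
        Matrix.cons_val_zero, Matrix.cons_val_one, Matrix.head_cons, Matrix.cons_val_two, Matrix.tail_cons]
      rfl
    · show genAction ω (X 0 ^ 3 + X 1 ^ 3 + X 2 ^ 3) = _
      simp only [genAction, map_add, map_mul, map_pow, map_one, aeval_X, aeval_C, algebraMap_eq,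
        Matrix.cons_val_zero, Matrix.cons_val_one, Matrix.head_cons, Matrix.cons_val_two, Matrix.tail_cons]
      show _ = X 0 ^ 3 + X 1 ^ 3 + X 2 ^ 3
      linear_combination (X 0 ^ 3 : MvPolynomial (Fin 3) ℂ) * hC
    · show genAction ω (X 0 ^ 2 * X 1 + X 1 ^ 2 * X 2 + C ω * (X 2 ^ 2 * X 0)) = _
      simp only [genAction, map_add, map_mul, map_pow, map_one, aeval_X, aeval_C, algebraMap_eq,
        Matrix.cons_val_zero, Matrix.cons_val_one, Matrix.head_cons, Matrix.cons_val_two, Matrix.tail_cons]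
      show _ = X 0 ^ 2 * X 1 + X 1 ^ 2 * X 2 + C ω * (X 2 ^ 2 * X 0)
      linear_combination (X 0 ^ 2 * X 1 : MvPolynomial (Fin 3) ℂ) * hC
    · show genAction ω (X 0 ^ 2 * X 2 + C ω * (X 1 ^ 2 * X 0) + C ω * (X 2 ^ 2 * X 1)) = _
      simp only [genAction, map_add, map_mul, map_pow, map_one, aeval_X, aeval_C, algebraMap_eq,
        Matrix.cons_val_zero, Matrix.cons_val_one, Matrix.head_cons, Matrix.cons_val_two, Matrix.tail_cons]
      show _ = X 0 ^ 2 * X 2 + C ω * (X 1 ^ 2 * X 0) + C ω * (X 2 ^ 2 * X 1)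
      linear_combination (X 0 ^ 2 * X 2 : MvPolynomial (Fin 3) ℂ) * hC
    · show genAction ω (X 0 ^ 3 * X 1 ^ 3 + X 1 ^ 3 * X 2 ^ 3 + X 2 ^ 3 * X 0 ^ 3) = _
      simp only [genAction, map_add, map_mul, map_pow, map_one, aeval_X, aeval_C, algebraMap_eq,
        Matrix.cons_val_zero, Matrix.cons_val_one, Matrix.head_cons, Matrix.cons_val_two, Matrix.tail_cons]
      show _ = X 0 ^ 3 * X 1 ^ 3 + X 1 ^ 3 * X 2 ^ 3 + X 2 ^ 3 * X 0 ^ 3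
      linear_combination (X 2 ^ 3 * X 0 ^ 3 + X 0 ^ 3 * X 1 ^ 3 : MvPolynomial (Fin 3) ℂ) * hC
    · show genAction ω (X 0 ^ 3 * X 1 ^ 2 * X 2 + C ω * (X 1 ^ 3 * X 2 ^ 2 * X 0) + X 2 ^ 3 * X 0 ^ 2 * X 1) = _
      simp only [genAction, map_add, map_mul, map_pow, map_one, aeval_X, aeval_C, algebraMap_eq,
        Matrix.cons_val_zero, Matrix.cons_val_one, Matrix.head_cons, Matrix.cons_val_two, Matrix.tail_cons]
      show _ = X 0 ^ 3 * X 1 ^ 2 * X 2 + C ω * (X 1 ^ 3 * X 2 ^ 2 * X 0) + X 2 ^ 3 * X 0 ^ 2 * X 1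
      linear_combination (X 2 ^ 3 * X 0 ^ 2 * X 1 + X 0 ^ 3 * X 1 ^ 2 * X 2 : MvPolynomial (Fin 3) ℂ) * hC
    · show genAction ω (X 0 ^ 3 * X 1 * X 2 ^ 2 + C ω ^ 2 * (X 1 ^ 3 * X 2 * X 0 ^ 2) + X 2 ^ 3 * X 0 * X 1 ^ 2) = _
      simp only [genAction, map_add, map_mul, map_pow, map_one, aeval_X, aeval_C, algebraMap_eq,
        Matrix.cons_val_zero, Matrix.cons_val_one, Matrix.head_cons, Matrix.cons_val_two, Matrix.tail_cons]
      show _ = X 0 ^ 3 * X 1 * X 2 ^ 2 + C ω ^ 2 * (X 1 ^ 3 * X 2 * X 0 ^ 2) + X 2 ^ 3 * X 0 * X 1 ^ 2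
      linear_combination (X 2 ^ 3 * X 0 * X 1 ^ 2 + X 0 ^ 3 * X 1 * X 2 ^ 2 : MvPolynomial (Fin 3) ℂ) * hC
    · show genAction ω (X 0 ^ 3 * X 1 ^ 3 * X 2 ^ 3) = _
      simp only [genAction, map_add, map_mul, map_pow, map_one, aeval_X, aeval_C, algebraMap_eq,
        Matrix.cons_val_zero, Matrix.cons_val_one, Matrix.head_cons, Matrix.cons_val_two, Matrix.tail_cons]
      show _ = X 0 ^ 3 * X 1 ^ 3 * X 2 ^ 3
      linear_combination (X 0 ^ 3 * X 1 ^ 3 * X 2 ^ 3 : MvPolynomial (Fin 3) ℂ) * hC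
  have hmem : ∀ i, basisT1 ω i ∈ tridegree333 := by
    intro i
    fin_cases i
    · show basisT1 ω 0 ∈ tridegree333
      rw [hb0]
      exact mono_mem _ _ _ (by norm_num) (by norm_num) (by norm_num) _
    · show basisT1 ω 1 ∈ tridegree333
      rw [hb1]
      exact Submodule.add_mem _ (Submodule.add_mem _ (mono_mem _ _ _ (by norm_num) (by norm_num) (by norm_num) _) (mono_mem _ _ _ (by norm_num) (by norm_num) (by norm_num) _)) (mono_mem _ _ _ (by norm_num) (by norm_num) (by norm_num) _)
    · show basisT1 ω 2 ∈ tridegree333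
      rw [hb2]
      exact Submodule.add_mem _ (Submodule.add_mem _ (mono_mem _ _ _ (by norm_num) (by norm_num) (by norm_num) _) (mono_mem _ _ _ (by norm_num) (by norm_num) (by norm_num) _)) (mono_mem _ _ _ (by norm_num) (by norm_num) (by norm_num) _)
    · show basisT1 ω 3 ∈ tridegree333
      rw [hb3]
      exact Submodule.add_mem _ (Submodule.add_mem _ (mono_mem _ _ _ (by norm_num) (by norm_num) (by norm_num) _) (mono_mem _ _ _ (by norm_num) (by norm_num) (by norm_num) _)) (mono_mem _ _ _ (by norm_num) (by norm_num) (by norm_num) _)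
    · show basisT1 ω 4 ∈ tridegree333
      rw [hb4]
      exact Submodule.add_mem _ (Submodule.add_mem _ (mono_mem _ _ _ (by norm_num) (by norm_num) (by norm_num) _) (mono_mem _ _ _ (by norm_num) (by norm_num) (by norm_num) _)) (mono_mem _ _ _ (by norm_num) (by norm_num) (by norm_num) _)
    · show basisT1 ω 5 ∈ tridegree333
      rw [hb5]
      exact Submodule.add_mem _ (Submodule.add_mem _ (mono_mem _ _ _ (by norm_num) (by norm_num) (by norm_num) _) (mono_mem _ _ _ (by norm_num) (by norm_num) (by norm_num) _)) (mono_mem _ _ _ (by norm_num) (by norm_num) (by norm_num) _)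
    · show basisT1 ω 6 ∈ tridegree333
      rw [hb6]
      exact Submodule.add_mem _ (Submodule.add_mem _ (mono_mem _ _ _ (by norm_num) (by norm_num) (by norm_num) _) (mono_mem _ _ _ (by norm_num) (by norm_num) (by norm_num) _)) (mono_mem _ _ _ (by norm_num) (by norm_num) (by norm_num) _)
    · show basisT1 ω 7 ∈ tridegree333
      rw [hb7]
      exact mono_mem _ _ _ (by norm_num) (by norm_num) (by norm_num) _
  have hle1 : Submodule.span ℂ (Set.range (basisT1 ω)) ≤ T1 ω := by
    rw [Submodule.span_le]
    rintro x ⟨i, rfl⟩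
    refine Submodule.mem_inf.mpr ⟨hmem i, ?_⟩
    rw [LinearMap.mem_ker, LinearMap.sub_apply, LinearMap.id_apply, AlgHom.toLinearMap_apply,
      hfix i, sub_self]
  have hle2 : T1 ω ≤ Submodule.span ℂ (Set.range (basisT1 ω)) := by
    intro p hp
    obtain ⟨hp1, hp2⟩ := Submodule.mem_inf.mp hp
    have hp' : genAction ω p = p := by
      have := LinearMap.mem_ker.mp hp2
      rw [LinearMap.sub_apply, LinearMap.id_apply, AlgHom.toLinearMap_apply, sub_eq_zero] at this
      exact this
    have hinv : ∀ a b c : ℕ, coeff (m3 a b c) p = ω ^ a * coeff (m3 b c a) p := by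
      intro a b c
      rw [← coeff_genAction ω p a b c, hp']
    have hzero : ∀ a b c : ℕ, ¬ (3 ∣ (a + b + c)) → coeff (m3 a b c) p = 0 := by
      intro a b c h
      have h1 := hinv a b c
      have h2 := hinv b c a
      have h3 := hinv c a b
      have key : (ω ^ (a + b + c) - 1) * coeff (m3 a b c) p = 0 := by
        rw [pow_add, pow_add]
        linear_combination (-1 : ℂ) * h1 - ω ^ a * h2 - ω ^ a * ω ^ b * h3
      rcases mul_eq_zero.mp key with h' | h'
      · exact absurd (sub_eq_zero.mp h') (fun he => h ((hω.pow_eq_one_iff_dvd _).mp he))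
      · exact h'
    have hzero2 : ∀ a : ℕ, ¬ (3 ∣ a) → coeff (m3 a a a) p = 0 := by
      intro a h
      have h1 := hinv a a a
      have key : (ω ^ a - 1) * coeff (m3 a a a) p = 0 := by linear_combination (-1 : ℂ) * h1
      rcases mul_eq_zero.mp key with h' | h'
      · exact absurd (sub_eq_zero.mp h') (fun he => h ((hω.pow_eq_one_iff_dvd _).mp he))
      · exact h'
    have key : p = coeff (m3 0 0 0) p • basisT1 ω 0 + coeff (m3 3 0 0) p • basisT1 ω 1 +
        coeff (m3 2 1 0) p • basisT1 ω 2 + coeff (m3 2 0 1) p • basisT1 ω 3 +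
        coeff (m3 3 3 0) p • basisT1 ω 4 + coeff (m3 3 2 1) p • basisT1 ω 5 +
        coeff (m3 3 1 2) p • basisT1 ω 6 + coeff (m3 3 3 3) p • basisT1 ω 7 := by
      apply MvPolynomial.ext
      intro m
      by_cases hm : ∀ i : Fin 3, m i ≤ 3
      · obtain ⟨a, b, c, ha, hbb, hc, rfl⟩ :
            ∃ a b c, a ≤ 3 ∧ b ≤ 3 ∧ c ≤ 3 ∧ m = m3 a b c :=
          ⟨m 0, m 1, m 2, hm 0, hm 1, hm 2, m_eq m⟩
        interval_cases a <;> interval_cases b <;> interval_cases c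
        · norm_num [m3_inj, hb0, hb1, hb2, hb3, hb4, hb5, hb6, hb7, coeff_add, coeff_smul, cmon, smul_eq_mul, mul_ite, mul_one, mul_zero]
        · norm_num [m3_inj, hb0, hb1, hb2, hb3, hb4, hb5, hb6, hb7, coeff_add, coeff_smul, cmon, smul_eq_mul, mul_ite, mul_one, mul_zero]
          exact hzero 0 0 1 (by decide)
        · norm_num [m3_inj, hb0, hb1, hb2, hb3, hb4, hb5, hb6, hb7, coeff_add, coeff_smul, cmon, smul_eq_mul, mul_ite, mul_one, mul_zero]
          exact hzero 0 0 2 (by decide)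
        · norm_num [m3_inj, hb0, hb1, hb2, hb3, hb4, hb5, hb6, hb7, coeff_add, coeff_smul, cmon, smul_eq_mul, mul_ite, mul_one, mul_zero]
          linear_combination hinv 0 0 3 + hinv 0 3 0
        · norm_num [m3_inj, hb0, hb1, hb2, hb3, hb4, hb5, hb6, hb7, coeff_add, coeff_smul, cmon, smul_eq_mul, mul_ite, mul_one, mul_zero]
          exact hzero 0 1 0 (by decide)
        · norm_num [m3_inj, hb0, hb1, hb2, hb3, hb4, hb5, hb6, hb7, coeff_add, coeff_smul, cmon, smul_eq_mul, mul_ite, mul_one, mul_zero]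
          exact hzero 0 1 1 (by decide)
        · norm_num [m3_inj, hb0, hb1, hb2, hb3, hb4, hb5, hb6, hb7, coeff_add, coeff_smul, cmon, smul_eq_mul, mul_ite, mul_one, mul_zero]
          linear_combination hinv 0 1 2 + hinv 1 2 0
        · norm_num [m3_inj, hb0, hb1, hb2, hb3, hb4, hb5, hb6, hb7, coeff_add, coeff_smul, cmon, smul_eq_mul, mul_ite, mul_one, mul_zero]
          exact hzero 0 1 3 (by decide)
        · norm_num [m3_inj, hb0, hb1, hb2, hb3, hb4, hb5, hb6, hb7, coeff_add, coeff_smul, cmon, smul_eq_mul, mul_ite, mul_one, mul_zero]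
          exact hzero 0 2 0 (by decide)
        · norm_num [m3_inj, hb0, hb1, hb2, hb3, hb4, hb5, hb6, hb7, coeff_add, coeff_smul, cmon, smul_eq_mul, mul_ite, mul_one, mul_zero]
          linear_combination hinv 0 2 1
        · norm_num [m3_inj, hb0, hb1, hb2, hb3, hb4, hb5, hb6, hb7, coeff_add, coeff_smul, cmon, smul_eq_mul, mul_ite, mul_one, mul_zero]
          exact hzero 0 2 2 (by decide)
        · norm_num [m3_inj, hb0, hb1, hb2, hb3, hb4, hb5, hb6, hb7, coeff_add, coeff_smul, cmon, smul_eq_mul, mul_ite, mul_one, mul_zero]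
          exact hzero 0 2 3 (by decide)
        · norm_num [m3_inj, hb0, hb1, hb2, hb3, hb4, hb5, hb6, hb7, coeff_add, coeff_smul, cmon, smul_eq_mul, mul_ite, mul_one, mul_zero]
          linear_combination hinv 0 3 0
        · norm_num [m3_inj, hb0, hb1, hb2, hb3, hb4, hb5, hb6, hb7, coeff_add, coeff_smul, cmon, smul_eq_mul, mul_ite, mul_one, mul_zero]
          exact hzero 0 3 1 (by decide)
        · norm_num [m3_inj, hb0, hb1, hb2, hb3, hb4, hb5, hb6, hb7, coeff_add, coeff_smul, cmon, smul_eq_mul, mul_ite, mul_one, mul_zero]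
          exact hzero 0 3 2 (by decide)
        · norm_num [m3_inj, hb0, hb1, hb2, hb3, hb4, hb5, hb6, hb7, coeff_add, coeff_smul, cmon, smul_eq_mul, mul_ite, mul_one, mul_zero]
          linear_combination hinv 0 3 3
        · norm_num [m3_inj, hb0, hb1, hb2, hb3, hb4, hb5, hb6, hb7, coeff_add, coeff_smul, cmon, smul_eq_mul, mul_ite, mul_one, mul_zero]
          exact hzero 1 0 0 (by decide)
        · norm_num [m3_inj, hb0, hb1, hb2, hb3, hb4, hb5, hb6, hb7, coeff_add, coeff_smul, cmon, smul_eq_mul, mul_ite, mul_one, mul_zero]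
          exact hzero 1 0 1 (by decide)
        · norm_num [m3_inj, hb0, hb1, hb2, hb3, hb4, hb5, hb6, hb7, coeff_add, coeff_smul, cmon, smul_eq_mul, mul_ite, mul_one, mul_zero]
          linear_combination hinv 1 0 2 + ω * hinv 0 2 1
        · norm_num [m3_inj, hb0, hb1, hb2, hb3, hb4, hb5, hb6, hb7, coeff_add, coeff_smul, cmon, smul_eq_mul, mul_ite, mul_one, mul_zero]
          exact hzero 1 0 3 (by decide)
        · norm_num [m3_inj, hb0, hb1, hb2, hb3, hb4, hb5, hb6, hb7, coeff_add, coeff_smul, cmon, smul_eq_mul, mul_ite, mul_one, mul_zero]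
          exact hzero 1 1 0 (by decide)
        · norm_num [m3_inj, hb0, hb1, hb2, hb3, hb4, hb5, hb6, hb7, coeff_add, coeff_smul, cmon, smul_eq_mul, mul_ite, mul_one, mul_zero]
          exact hzero2 1 (by decide)
        · norm_num [m3_inj, hb0, hb1, hb2, hb3, hb4, hb5, hb6, hb7, coeff_add, coeff_smul, cmon, smul_eq_mul, mul_ite, mul_one, mul_zero]
          exact hzero 1 1 2 (by decide)
        · norm_num [m3_inj, hb0, hb1, hb2, hb3, hb4, hb5, hb6, hb7, coeff_add, coeff_smul, cmon, smul_eq_mul, mul_ite, mul_one, mul_zero]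
          exact hzero 1 1 3 (by decide)
        · norm_num [m3_inj, hb0, hb1, hb2, hb3, hb4, hb5, hb6, hb7, coeff_add, coeff_smul, cmon, smul_eq_mul, mul_ite, mul_one, mul_zero]
          linear_combination hinv 1 2 0
        · norm_num [m3_inj, hb0, hb1, hb2, hb3, hb4, hb5, hb6, hb7, coeff_add, coeff_smul, cmon, smul_eq_mul, mul_ite, mul_one, mul_zero]
          exact hzero 1 2 1 (by decide)
        · norm_num [m3_inj, hb0, hb1, hb2, hb3, hb4, hb5, hb6, hb7, coeff_add, coeff_smul, cmon, smul_eq_mul, mul_ite, mul_one, mul_zero]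
          exact hzero 1 2 2 (by decide)
        · norm_num [m3_inj, hb0, hb1, hb2, hb3, hb4, hb5, hb6, hb7, coeff_add, coeff_smul, cmon, smul_eq_mul, mul_ite, mul_one, mul_zero]
          linear_combination hinv 1 2 3 + ω * hinv 2 3 1 + coeff (m3 3 1 2) p * hω3
        · norm_num [m3_inj, hb0, hb1, hb2, hb3, hb4, hb5, hb6, hb7, coeff_add, coeff_smul, cmon, smul_eq_mul, mul_ite, mul_one, mul_zero]
          exact hzero 1 3 0 (by decide)
        · norm_num [m3_inj, hb0, hb1, hb2, hb3, hb4, hb5, hb6, hb7, coeff_add, coeff_smul, cmon, smul_eq_mul, mul_ite, mul_one, mul_zero]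
          exact hzero 1 3 1 (by decide)
        · norm_num [m3_inj, hb0, hb1, hb2, hb3, hb4, hb5, hb6, hb7, coeff_add, coeff_smul, cmon, smul_eq_mul, mul_ite, mul_one, mul_zero]
          linear_combination hinv 1 3 2
        · norm_num [m3_inj, hb0, hb1, hb2, hb3, hb4, hb5, hb6, hb7, coeff_add, coeff_smul, cmon, smul_eq_mul, mul_ite, mul_one, mul_zero]
          exact hzero 1 3 3 (by decide)
        · norm_num [m3_inj, hb0, hb1, hb2, hb3, hb4, hb5, hb6, hb7, coeff_add, coeff_smul, cmon, smul_eq_mul, mul_ite, mul_one, mul_zero]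
          exact hzero 2 0 0 (by decide)
        · norm_num [m3_inj, hb0, hb1, hb2, hb3, hb4, hb5, hb6, hb7, coeff_add, coeff_smul, cmon, smul_eq_mul, mul_ite, mul_one, mul_zero]
        · norm_num [m3_inj, hb0, hb1, hb2, hb3, hb4, hb5, hb6, hb7, coeff_add, coeff_smul, cmon, smul_eq_mul, mul_ite, mul_one, mul_zero]
          exact hzero 2 0 2 (by decide)
        · norm_num [m3_inj, hb0, hb1, hb2, hb3, hb4, hb5, hb6, hb7, coeff_add, coeff_smul, cmon, smul_eq_mul, mul_ite, mul_one, mul_zero]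
          exact hzero 2 0 3 (by decide)
        · norm_num [m3_inj, hb0, hb1, hb2, hb3, hb4, hb5, hb6, hb7, coeff_add, coeff_smul, cmon, smul_eq_mul, mul_ite, mul_one, mul_zero]
        · norm_num [m3_inj, hb0, hb1, hb2, hb3, hb4, hb5, hb6, hb7, coeff_add, coeff_smul, cmon, smul_eq_mul, mul_ite, mul_one, mul_zero]
          exact hzero 2 1 1 (by decide)
        · norm_num [m3_inj, hb0, hb1, hb2, hb3, hb4, hb5, hb6, hb7, coeff_add, coeff_smul, cmon, smul_eq_mul, mul_ite, mul_one, mul_zero]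
          exact hzero 2 1 2 (by decide)
        · norm_num [m3_inj, hb0, hb1, hb2, hb3, hb4, hb5, hb6, hb7, coeff_add, coeff_smul, cmon, smul_eq_mul, mul_ite, mul_one, mul_zero]
          linear_combination hinv 2 1 3 + ω^2 * hinv 1 3 2 + coeff (m3 3 2 1) p * hω3
        · norm_num [m3_inj, hb0, hb1, hb2, hb3, hb4, hb5, hb6, hb7, coeff_add, coeff_smul, cmon, smul_eq_mul, mul_ite, mul_one, mul_zero]
          exact hzero 2 2 0 (by decide)
        · norm_num [m3_inj, hb0, hb1, hb2, hb3, hb4, hb5, hb6, hb7, coeff_add, coeff_smul, cmon, smul_eq_mul, mul_ite, mul_one, mul_zero]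
          exact hzero 2 2 1 (by decide)
        · norm_num [m3_inj, hb0, hb1, hb2, hb3, hb4, hb5, hb6, hb7, coeff_add, coeff_smul, cmon, smul_eq_mul, mul_ite, mul_one, mul_zero]
          exact hzero2 2 (by decide)
        · norm_num [m3_inj, hb0, hb1, hb2, hb3, hb4, hb5, hb6, hb7, coeff_add, coeff_smul, cmon, smul_eq_mul, mul_ite, mul_one, mul_zero]
          exact hzero 2 2 3 (by decide)
        · norm_num [m3_inj, hb0, hb1, hb2, hb3, hb4, hb5, hb6, hb7, coeff_add, coeff_smul, cmon, smul_eq_mul, mul_ite, mul_one, mul_zero]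
          exact hzero 2 3 0 (by decide)
        · norm_num [m3_inj, hb0, hb1, hb2, hb3, hb4, hb5, hb6, hb7, coeff_add, coeff_smul, cmon, smul_eq_mul, mul_ite, mul_one, mul_zero]
          linear_combination hinv 2 3 1
        · norm_num [m3_inj, hb0, hb1, hb2, hb3, hb4, hb5, hb6, hb7, coeff_add, coeff_smul, cmon, smul_eq_mul, mul_ite, mul_one, mul_zero]
          exact hzero 2 3 2 (by decide)
        · norm_num [m3_inj, hb0, hb1, hb2, hb3, hb4, hb5, hb6, hb7, coeff_add, coeff_smul, cmon, smul_eq_mul, mul_ite, mul_one, mul_zero]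
          exact hzero 2 3 3 (by decide)
        · norm_num [m3_inj, hb0, hb1, hb2, hb3, hb4, hb5, hb6, hb7, coeff_add, coeff_smul, cmon, smul_eq_mul, mul_ite, mul_one, mul_zero]
        · norm_num [m3_inj, hb0, hb1, hb2, hb3, hb4, hb5, hb6, hb7, coeff_add, coeff_smul, cmon, smul_eq_mul, mul_ite, mul_one, mul_zero]
          exact hzero 3 0 1 (by decide)
        · norm_num [m3_inj, hb0, hb1, hb2, hb3, hb4, hb5, hb6, hb7, coeff_add, coeff_smul, cmon, smul_eq_mul, mul_ite, mul_one, mul_zero]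
          exact hzero 3 0 2 (by decide)
        · norm_num [m3_inj, hb0, hb1, hb2, hb3, hb4, hb5, hb6, hb7, coeff_add, coeff_smul, cmon, smul_eq_mul, mul_ite, mul_one, mul_zero]
          linear_combination hinv 3 0 3 + ω^3 * hinv 0 3 3 + coeff (m3 3 3 0) p * hω3
        · norm_num [m3_inj, hb0, hb1, hb2, hb3, hb4, hb5, hb6, hb7, coeff_add, coeff_smul, cmon, smul_eq_mul, mul_ite, mul_one, mul_zero]
          exact hzero 3 1 0 (by decide)
        · norm_num [m3_inj, hb0, hb1, hb2, hb3, hb4, hb5, hb6, hb7, coeff_add, coeff_smul, cmon, smul_eq_mul, mul_ite, mul_one, mul_zero]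
          exact hzero 3 1 1 (by decide)
        · norm_num [m3_inj, hb0, hb1, hb2, hb3, hb4, hb5, hb6, hb7, coeff_add, coeff_smul, cmon, smul_eq_mul, mul_ite, mul_one, mul_zero]
        · norm_num [m3_inj, hb0, hb1, hb2, hb3, hb4, hb5, hb6, hb7, coeff_add, coeff_smul, cmon, smul_eq_mul, mul_ite, mul_one, mul_zero]
          exact hzero 3 1 3 (by decide)
        · norm_num [m3_inj, hb0, hb1, hb2, hb3, hb4, hb5, hb6, hb7, coeff_add, coeff_smul, cmon, smul_eq_mul, mul_ite, mul_one, mul_zero]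
          exact hzero 3 2 0 (by decide)
        · norm_num [m3_inj, hb0, hb1, hb2, hb3, hb4, hb5, hb6, hb7, coeff_add, coeff_smul, cmon, smul_eq_mul, mul_ite, mul_one, mul_zero]
        · norm_num [m3_inj, hb0, hb1, hb2, hb3, hb4, hb5, hb6, hb7, coeff_add, coeff_smul, cmon, smul_eq_mul, mul_ite, mul_one, mul_zero]
          exact hzero 3 2 2 (by decide)
        · norm_num [m3_inj, hb0, hb1, hb2, hb3, hb4, hb5, hb6, hb7, coeff_add, coeff_smul, cmon, smul_eq_mul, mul_ite, mul_one, mul_zero]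
          exact hzero 3 2 3 (by decide)
        · norm_num [m3_inj, hb0, hb1, hb2, hb3, hb4, hb5, hb6, hb7, coeff_add, coeff_smul, cmon, smul_eq_mul, mul_ite, mul_one, mul_zero]
        · norm_num [m3_inj, hb0, hb1, hb2, hb3, hb4, hb5, hb6, hb7, coeff_add, coeff_smul, cmon, smul_eq_mul, mul_ite, mul_one, mul_zero]
          exact hzero 3 3 1 (by decide)
        · norm_num [m3_inj, hb0, hb1, hb2, hb3, hb4, hb5, hb6, hb7, coeff_add, coeff_smul, cmon, smul_eq_mul, mul_ite, mul_one, mul_zero]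
          exact hzero 3 3 2 (by decide)
        · norm_num [m3_inj, hb0, hb1, hb2, hb3, hb4, hb5, hb6, hb7, coeff_add, coeff_smul, cmon, smul_eq_mul, mul_ite, mul_one, mul_zero]
      · rw [tridegree_coeff hp1 hm, tridegree_coeff _ hm]
        refine Submodule.add_mem _ (Submodule.add_mem _ (Submodule.add_mem _ (Submodule.add_mem _
          (Submodule.add_mem _ (Submodule.add_mem _ (Submodule.add_mem _
          (Submodule.smul_mem _ _ (hmem 0)) (Submodule.smul_mem _ _ (hmem 1)))
          (Submodule.smul_mem _ _ (hmem 2))) (Submodule.smul_mem _ _ (hmem 3)))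
          (Submodule.smul_mem _ _ (hmem 4))) (Submodule.smul_mem _ _ (hmem 5)))
          (Submodule.smul_mem _ _ (hmem 6))) (Submodule.smul_mem _ _ (hmem 7))
    rw [key]
    have hb' : ∀ i : Fin 8, basisT1 ω i ∈ Submodule.span ℂ (Set.range (basisT1 ω)) :=
      fun i => Submodule.subset_span ⟨i, rfl⟩
    exact Submodule.add_mem _ (Submodule.add_mem _ (Submodule.add_mem _ (Submodule.add_mem _
      (Submodule.add_mem _ (Submodule.add_mem _ (Submodule.add_mem _
      (Submodule.smul_mem _ _ (hb' 0)) (Submodule.smul_mem _ _ (hb' 1)))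
      (Submodule.smul_mem _ _ (hb' 2))) (Submodule.smul_mem _ _ (hb' 3)))
      (Submodule.smul_mem _ _ (hb' 4))) (Submodule.smul_mem _ _ (hb' 5)))
      (Submodule.smul_mem _ _ (hb' 6))) (Submodule.smul_mem _ _ (hb' 7))
  have hspan : T1 ω = Submodule.span ℂ (Set.range (basisT1 ω)) := le_antisymm hle2 hle1
  refine ⟨?_, hspan, hindep⟩
  rw [hspan]
  simpa using finrank_span_eq_card hindep

end
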